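/- Let G be a second countable, unimodular, locally compact group with Haar measure, σ a 2-cocycle on G, Γ a discrete subgroup of G, and B ⊆ G a Borel fundamental domain for Γ (i.e., {γB : γ ∈ Γ} partitions G). Then the map U from the Hilbert space of square-summable L²(B)-valued families over Γ (equivalently ℓ²(Γ) ⊗ L²(B)) to L²(G), determined by U(f ⊗ g)(γy) = σ(γ,y) f(γ) g(y) for γ ∈ Γ and y ∈ B, is a well-defined unitary operator, and for every γ ∈ Γ it satisfies U ∘ (λ_σ^Γ(γ) ⊗ I) = λ_σ^G(γ) ∘ U, where λ_σ^Γ and λ_σ^G are the σ-projective left regular representations of Γ on ℓ²(Γ) and of G on L²(G) respectively. -/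

import Mathlib

open MeasureTheory
open scoped ENNReal

set_option maxHeartbeats 4000000

private theorem Lp_ext_ae {α E : Type*} [MeasurableSpace α] {μ : Measure α}
    [NormedAddCommGroup E] {p : ℝ≥0∞} {f g : Lp E p μ} (h : ⇑f =ᵐ[μ] ⇑g) : f = g := by
  rw [← sub_eq_zero, Lp.eq_zero_iff_ae_eq_zero]
  refine (Lp.coeFn_sub f g).trans ?_
  filter_upwards [h] with x hx
  simp [hx]

set_option maxHeartbeats 1000000 in
private theorem tsum_loc {α : Type*} [MeasurableSpace α] {μ ν : Measure α} (hν : ν ≤ μ)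
    {ι : Type*} {Gs : ι → Type*} [∀ i, NormedAddCommGroup (Gs i)]
    [∀ i, InnerProductSpace ℂ (Gs i)] [∀ i, CompleteSpace (Gs i)]
    {V : ∀ i, Gs i →ₗᵢ[ℂ] Lp ℂ 2 μ}
    (hsum : IsHilbertSum ℂ Gs V) (F : lp Gs 2) (γ : ι)
    (hvanish : ∀ δ, δ ≠ γ → (V δ (F δ) : α → ℂ) =ᵐ[ν] 0) :
    (hsum.linearIsometryEquiv.symm F : α → ℂ) =ᵐ[ν] (V γ (F γ) : α → ℂ) := by
  classical
  have hHS := hsum.hasSum_linearIsometryEquiv_symm F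
  set UF := hsum.linearIsometryEquiv.symm F with hUF_def
  clear_value UF
  have hνac : ν ≪ μ := Measure.absolutelyContinuous_of_le hν
  have hX : eLpNorm ((UF - V γ (F γ) : Lp ℂ 2 μ) : α → ℂ) 2 ν = 0 := by
    refine le_antisymm ?_ zero_le
    refine ENNReal.le_of_forall_pos_le_add (fun ε hε _ => ?_)
    rw [zero_add]
    have htd := Metric.tendsto_nhds.mp hHS ε (by exact_mod_cast hε)
    obtain ⟨s₀, hs₀⟩ := Filter.eventually_atTop.mp htd
    set s : Finset ι := insert γ s₀ with hs_def
    have hss : dist (∑ γ' ∈ s, V γ' (F γ')) UF < ε := hs₀ s (Finset.subset_insert γ s₀)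
    set S := ∑ γ' ∈ s, V γ' (F γ') with hS_def
    clear_value S
    have hrem : ∀ t : Finset ι, γ ∉ t →
        ((∑ γ' ∈ t, V γ' (F γ') : Lp ℂ 2 μ) : α → ℂ) =ᵐ[ν] 0 := by
      intro t
      induction t using Finset.induction_on with
      | empty =>
        intro _
        simp only [Finset.sum_empty]
        exact ((Lp.coeFn_zero ℂ 2 μ).filter_mono hνac.ae_le)
      | @insert δ t' hδ ih =>
        intro hγt
        have hδγ : δ ≠ γ := fun hc => hγt (by simp [hc])
        rw [Finset.sum_insert hδ]
        refine ((Lp.coeFn_add _ _).filter_mono hνac.ae_le).trans ?_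
        have e2 := ih (fun hc => hγt (by simp [hc]))
        filter_upwards [hvanish δ hδγ, e2] with x hx1 hx2
        simp only [Pi.add_apply, hx1, hx2, Pi.zero_apply, add_zero]
    have hsplit : (UF - V γ (F γ) : Lp ℂ 2 μ) = (UF - S) + (S - V γ (F γ)) :=
      (sub_add_sub_cancel _ _ _).symm
    have hasm1 : AEStronglyMeasurable ((UF - S : Lp ℂ 2 μ) : α → ℂ) ν :=
      (Lp.aestronglyMeasurable _).mono_ac hνac
    have hasm2 : AEStronglyMeasurable ((S - V γ (F γ) : Lp ℂ 2 μ) : α → ℂ) ν :=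
      (Lp.aestronglyMeasurable _).mono_ac hνac
    calc eLpNorm ((UF - V γ (F γ) : Lp ℂ 2 μ) : α → ℂ) 2 ν
        = eLpNorm (((UF - S : Lp ℂ 2 μ) : α → ℂ) + ((S - V γ (F γ) : Lp ℂ 2 μ) : α → ℂ)) 2 ν := by
          apply eLpNorm_congr_ae
          rw [hsplit]
          exact ((Lp.coeFn_add _ _).filter_mono hνac.ae_le)
      _ ≤ eLpNorm ((UF - S : Lp ℂ 2 μ) : α → ℂ) 2 ν
          + eLpNorm ((S - V γ (F γ) : Lp ℂ 2 μ) : α → ℂ) 2 ν :=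
          eLpNorm_add_le hasm1 hasm2 one_le_two
      _ = eLpNorm ((UF - S : Lp ℂ 2 μ) : α → ℂ) 2 ν := by
          have hz : ((S - V γ (F γ) : Lp ℂ 2 μ) : α → ℂ) =ᵐ[ν] 0 := by
            have hγs : γ ∈ s := Finset.mem_insert_self γ s₀
            have he : S - V γ (F γ) = ∑ γ' ∈ s.erase γ, V γ' (F γ') := by
              rw [hS_def, ← Finset.sum_erase_add s _ hγs]
              exact add_sub_cancel_right _ _
            rw [he]
            exact hrem _ (Finset.notMem_erase γ s)
          rw [eLpNorm_eq_zero_of_ae_zero hz, add_zero]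
      _ ≤ eLpNorm ((UF - S : Lp ℂ 2 μ) : α → ℂ) 2 μ := eLpNorm_mono_measure _ hν
      _ = (‖UF - S‖₊ : ℝ≥0∞) := by
          rw [Lp.nnnorm_def, ENNReal.coe_toNNReal (Lp.eLpNorm_ne_top _)]
      _ ≤ (ε : ℝ≥0∞) := by
          rw [ENNReal.coe_le_coe]
          have h5 : ‖UF - S‖ ≤ (ε : ℝ) := by
            rw [← dist_eq_norm, dist_comm]
            exact le_of_lt hss
          exact h5
  have hae : ((UF - V γ (F γ) : Lp ℂ 2 μ) : α → ℂ) =ᵐ[ν] 0 :=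
    (eLpNorm_eq_zero_iff ((Lp.aestronglyMeasurable _).mono_ac hνac) (by norm_num)).mp hX
  filter_upwards [hae, (Lp.coeFn_sub UF (V γ (F γ))).filter_mono hνac.ae_le] with x h1 h2
  have h3 := h2.symm.trans h1
  simpa [sub_eq_zero] using h3

/-- for a discrete subgroup `Γ` of a second countable unimodular locally
compact group `G` with Borel fundamental domain `B`, the map `U` determined by
`U(f ⊗ g)(γy) = σ(γ,y) f(γ) g(y)` is a unitary from `ℓ²(Γ) ⊗ L²(B)` (realized as the
Hilbert space of square-summable `L²(B)`-valued families over `Γ`) onto `L²(G)`,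
intertwining `λ_σ^Γ(γ) ⊗ I` with `λ_σ^G(γ)`. -/
theorem twisted_regular_module_unitary {G : Type*} [Group G] [TopologicalSpace G]
    [IsTopologicalGroup G] [LocallyCompactSpace G] [SecondCountableTopology G]
    [MeasurableSpace G] [BorelSpace G]
    (μ : Measure G) [μ.IsHaarMeasure] [μ.IsMulRightInvariant]
    (σ : G → G → ℂ)
    (hσ_unit : ∀ x y, ‖σ x y‖ = 1)
    (hσ_meas : Measurable fun p : G × G => σ p.1 p.2)
    (hσ_cocycle : ∀ x y z, σ x y * σ (x * y) z = σ x (y * z) * σ y z)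
    (hσ_one : σ 1 1 = 1)
    -- Γ is a discrete subgroup with Borel fundamental domain B
    (Γ : Subgroup G) [DiscreteTopology Γ]
    (B : Set G) (hBmeas : MeasurableSet B)
    (hB : ∀ x : G, ∃! γ : Γ, (γ : G)⁻¹ * x ∈ B)
    -- the σ-projective left regular representation of G on L²(G)
    (lamG : G → (Lp ℂ 2 μ →L[ℂ] Lp ℂ 2 μ))
    (hlamG : ∀ (x : G) (f : Lp ℂ 2 μ),
      (lamG x f : G → ℂ) =ᵐ[μ] fun y => σ x (x⁻¹ * y) * f (x⁻¹ * y))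
    -- λ_σ^Γ(γ) ⊗ I on the square-summable L²(B)-valued families over Γ
    (lamΓ : Γ → (lp (fun _ : Γ => Lp ℂ 2 (μ.restrict B)) 2 →L[ℂ]
        lp (fun _ : Γ => Lp ℂ 2 (μ.restrict B)) 2))
    (hlamΓ : ∀ (γ : Γ) (F : lp (fun _ : Γ => Lp ℂ 2 (μ.restrict B)) 2) (γ' : Γ),
      (lamΓ γ F) γ' = σ (γ : G) ((γ⁻¹ * γ' : Γ) : G) • F (γ⁻¹ * γ')) :
    ∃ U : lp (fun _ : Γ => Lp ℂ 2 (μ.restrict B)) 2 ≃ₗᵢ[ℂ] Lp ℂ 2 μ,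
      -- U is determined by U(f ⊗ g)(γ y) = σ(γ, y) f(γ) g(y):
      (∀ (F : lp (fun _ : Γ => Lp ℂ 2 (μ.restrict B)) 2) (γ : Γ),
          ∀ᵐ y ∂(μ.restrict B), (U F : G → ℂ) ((γ : G) * y) = σ (γ : G) y * (F γ : G → ℂ) y) ∧
      -- U intertwines λ_σ^Γ(γ) ⊗ I with λ_σ^G(γ):
      (∀ (γ : Γ) (F : lp (fun _ : Γ => Lp ℂ 2 (μ.restrict B)) 2),
          U (lamΓ γ F) = lamG (γ : G) (U F)) := by
  classical
  haveI : Countable Γ := TopologicalSpace.separableSpace_iff_countable.mp inferInstance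
  -- the translates of B
  set Bl : Γ → Set G := fun γ => (fun x => (γ : G)⁻¹ * x) ⁻¹' B with hBl_def
  have hBl_meas : ∀ γ, MeasurableSet (Bl γ) := fun γ => hBmeas.preimage (measurable_const_mul _)
  have hdisj : ∀ γ γ' : Γ, γ ≠ γ' → ∀ x, x ∈ Bl γ → x ∉ Bl γ' := by
    intro γ γ' h x hx hx'
    exact h (((hB x).unique hx hx'))
  have hcover : ∀ x : G, ∃ γ : Γ, x ∈ Bl γ := fun x => (hB x).exists
  -- measure preserving maps
  have mpγ : ∀ γ : Γ, MeasurePreserving (fun y => (γ:G) * y) (μ.restrict B)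
      (μ.restrict (Bl γ)) := by
    intro γ
    refine ⟨measurable_const_mul _, ?_⟩
    have h1 : (fun y => (γ:G) * y) ⁻¹' (Bl γ) = B := by ext y; simp [hBl_def]
    calc Measure.map (fun y => (γ:G)*y) (μ.restrict B)
        = Measure.map (fun y => (γ:G)*y) (μ.restrict ((fun y => (γ:G)*y) ⁻¹' (Bl γ))) := by
          rw [h1]
      _ = (Measure.map (fun y => (γ:G)*y) μ).restrict (Bl γ) :=
          (Measure.restrict_map (measurable_const_mul _) (hBl_meas γ)).symm
      _ = μ.restrict (Bl γ) := by rw [(measurePreserving_mul_left μ (γ:G)).map_eq]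
  have mpγ' : ∀ γ : Γ, MeasurePreserving (fun x => (γ:G)⁻¹ * x) (μ.restrict (Bl γ))
      (μ.restrict B) := by
    intro γ
    refine ⟨measurable_const_mul _, ?_⟩
    have h1 : (fun x => (γ:G)⁻¹ * x) ⁻¹' B = Bl γ := rfl
    calc Measure.map (fun x => (γ:G)⁻¹*x) (μ.restrict (Bl γ))
        = Measure.map (fun x => (γ:G)⁻¹*x) (μ.restrict ((fun x => (γ:G)⁻¹*x) ⁻¹' B)) := by
          rw [h1]
      _ = (Measure.map (fun x => (γ:G)⁻¹*x) μ).restrict B :=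
          (Measure.restrict_map (measurable_const_mul _) hBmeas).symm
      _ = μ.restrict B := by rw [(measurePreserving_mul_left μ ((γ:G)⁻¹)).map_eq]
  -- measurability of twisted cocycle factors
  have hσ1 : ∀ γ : Γ, Measurable fun x => σ (γ:G) ((γ:G)⁻¹ * x) := fun γ =>
    hσ_meas.comp (measurable_const.prodMk (measurable_const_mul _))
  have hσne : ∀ x y, σ x y ≠ 0 := by
    intro x y h
    have := hσ_unit x y
    rw [h, norm_zero] at this
    norm_num at this
  -- the building block functions
  set Vf : Γ → (G → ℂ) → (G → ℂ) := fun γ g =>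
    (Bl γ).indicator (fun x => σ (γ:G) ((γ:G)⁻¹ * x) * g ((γ:G)⁻¹ * x)) with hVf_def
  have hVf_asm : ∀ (γ : Γ) (g : G → ℂ), AEStronglyMeasurable g (μ.restrict B) →
      AEStronglyMeasurable (Vf γ g) μ := by
    intro γ g hg
    rw [hVf_def]
    rw [aestronglyMeasurable_indicator_iff (hBl_meas γ)]
    exact ((hσ1 γ).aestronglyMeasurable.mul
      (hg.comp_quasiMeasurePreserving (mpγ' γ).quasiMeasurePreserving))
  have hVf_norm : ∀ (γ : Γ) (g : G → ℂ), AEStronglyMeasurable g (μ.restrict B) →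
      eLpNorm (Vf γ g) 2 μ = eLpNorm g 2 (μ.restrict B) := by
    intro γ g hg
    rw [hVf_def]
    rw [eLpNorm_indicator_eq_eLpNorm_restrict (hBl_meas γ)]
    have h1 : eLpNorm (fun x => σ (γ:G) ((γ:G)⁻¹*x) * g ((γ:G)⁻¹*x)) 2 (μ.restrict (Bl γ))
        = eLpNorm (g ∘ fun x => (γ:G)⁻¹*x) 2 (μ.restrict (Bl γ)) := by
      apply eLpNorm_congr_norm_ae
      filter_upwards with x
      rw [norm_mul, hσ_unit, one_mul]
      rfl
    rw [h1]
    exact eLpNorm_comp_measurePreserving hg (mpγ' γ)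
  have hVf_congr : ∀ (γ : Γ) (g₁ g₂ : G → ℂ), g₁ =ᵐ[μ.restrict B] g₂ →
      Vf γ g₁ =ᵐ[μ] Vf γ g₂ := by
    intro γ g₁ g₂ h
    have h2 : ∀ᵐ x ∂μ.restrict (Bl γ), g₁ ((γ:G)⁻¹ * x) = g₂ ((γ:G)⁻¹ * x) :=
      (mpγ' γ).quasiMeasurePreserving.tendsto_ae.eventually h
    have h3 := (ae_restrict_iff' (hBl_meas γ)).mp h2
    filter_upwards [h3] with x hx
    by_cases hxB : x ∈ Bl γ
    · simp only [hVf_def, Set.indicator_of_mem hxB, hx hxB]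
    · simp only [hVf_def, Set.indicator_of_notMem hxB]
  have hVf_mem : ∀ (γ : Γ) (g : Lp ℂ 2 (μ.restrict B)), MemLp (Vf γ (g : G → ℂ)) 2 μ := by
    intro γ g
    refine ⟨hVf_asm γ _ (Lp.aestronglyMeasurable g), ?_⟩
    rw [hVf_norm γ _ (Lp.aestronglyMeasurable g)]
    exact Lp.eLpNorm_lt_top g
  -- the isometries
  set V : ∀ _ : Γ, Lp ℂ 2 (μ.restrict B) →ₗᵢ[ℂ] Lp ℂ 2 μ := fun γ =>
    { toFun := fun g => (hVf_mem γ g).toLp _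
      map_add' := by
        intro g₁ g₂
        rw [← MemLp.toLp_add (hVf_mem γ g₁) (hVf_mem γ g₂)]
        apply MemLp.toLp_congr
        refine (hVf_congr γ _ _ (Lp.coeFn_add g₁ g₂)).trans ?_
        filter_upwards with x
        simp only [hVf_def, Pi.add_apply]
        by_cases hxB : x ∈ Bl γ
        · simp [Set.indicator_of_mem hxB, mul_add]
        · simp [Set.indicator_of_notMem hxB]
      map_smul' := by
        intro c g
        rw [RingHom.id_apply, ← MemLp.toLp_const_smul c (hVf_mem γ g)]
        apply MemLp.toLp_congr
        refine (hVf_congr γ _ _ (Lp.coeFn_smul c g)).trans ?_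
        filter_upwards with x
        simp only [hVf_def, Pi.smul_apply, smul_eq_mul]
        by_cases hxB : x ∈ Bl γ
        · simp [Set.indicator_of_mem hxB]; ring
        · simp [Set.indicator_of_notMem hxB]
      norm_map' := by
        intro g
        simp only [LinearMap.coe_mk, AddHom.coe_mk]
        rw [Lp.norm_toLp, hVf_norm γ _ (Lp.aestronglyMeasurable g), Lp.norm_def] } with hV_def
  have hVcoe : ∀ (γ : Γ) (g : Lp ℂ 2 (μ.restrict B)),
      (V γ g : G → ℂ) =ᵐ[μ] Vf γ (g : G → ℂ) := fun γ g => (hVf_mem γ g).coeFn_toLp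
  clear_value V
  -- orthogonality
  have hortho : OrthogonalFamily ℂ (fun _ : Γ => Lp ℂ 2 (μ.restrict B)) V := by
    intro γ γ' h g g'
    rw [MeasureTheory.L2.inner_def]
    refine integral_eq_zero_of_ae ?_
    filter_upwards [hVcoe γ g, hVcoe γ' g'] with x h1 h2
    rw [h1, h2]
    by_cases hxB : x ∈ Bl γ
    · have : x ∉ Bl γ' := hdisj γ γ' h x hxB
      simp only [hVf_def, Set.indicator_of_notMem this, inner_zero_right, Pi.zero_apply]
    · simp only [hVf_def, Set.indicator_of_notMem hxB, inner_zero_left, Pi.zero_apply]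
  -- totality
  have htotal : ⊤ ≤ (⨆ γ, LinearMap.range (V γ).toLinearMap).topologicalClosure := by
    rw [top_le_iff, Submodule.topologicalClosure_eq_top_iff, Submodule.eq_bot_iff]
    intro h hmem
    have hzero : ∀ γ : Γ, (Bl γ).indicator (h : G → ℂ) =ᵐ[μ] 0 := by
      intro γ
      have hWasm : AEStronglyMeasurable (fun y => (σ (γ:G) y)⁻¹ * (h : G → ℂ) ((γ:G) * y))
          (μ.restrict B) := by
        refine ((hσ_meas.comp (measurable_const.prodMk measurable_id)).inv.aestronglyMeasurable.mul
          (((Lp.aestronglyMeasurable h).restrict).comp_quasiMeasurePreserving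
            (mpγ γ).quasiMeasurePreserving))
      have hWnorm : eLpNorm (fun y => (σ (γ:G) y)⁻¹ * (h : G → ℂ) ((γ:G) * y)) 2 (μ.restrict B)
          = eLpNorm (h : G → ℂ) 2 (μ.restrict (Bl γ)) := by
        have e1 : eLpNorm (fun y => (σ (γ:G) y)⁻¹ * (h : G → ℂ) ((γ:G) * y)) 2 (μ.restrict B)
            = eLpNorm ((h : G → ℂ) ∘ fun y => (γ:G) * y) 2 (μ.restrict B) := by
          apply eLpNorm_congr_norm_ae
          filter_upwards with y
          rw [norm_mul, norm_inv, hσ_unit, inv_one, one_mul]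
          rfl
        rw [e1]
        exact eLpNorm_comp_measurePreserving (Lp.aestronglyMeasurable h).restrict (mpγ γ)
      have hWmem : MemLp (fun y => (σ (γ:G) y)⁻¹ * (h : G → ℂ) ((γ:G) * y)) 2 (μ.restrict B) := by
        refine ⟨hWasm, ?_⟩
        rw [hWnorm]
        exact lt_of_le_of_lt (eLpNorm_mono_measure _ Measure.restrict_le_self)
          (Lp.eLpNorm_lt_top h)
      set g := hWmem.toLp _ with hg_def
      have hVg : (V γ g : G → ℂ) =ᵐ[μ] (Bl γ).indicator (h : G → ℂ) := by
        refine (hVcoe γ g).trans ?_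
        refine (hVf_congr γ _ _ hWmem.coeFn_toLp).trans ?_
        filter_upwards with x
        by_cases hxB : x ∈ Bl γ
        · simp only [hVf_def, Set.indicator_of_mem hxB, mul_inv_cancel_left]
          rw [← mul_assoc, mul_inv_cancel₀ (hσne _ _), one_mul]
        · simp only [hVf_def, Set.indicator_of_notMem hxB]
      have h0 : (inner ℂ (V γ g) h : ℂ) = 0 :=
        (Submodule.mem_orthogonal _ _).1 hmem _
          (Submodule.mem_iSup_of_mem γ (LinearMap.mem_range_self _ g))
      have h1 : (inner ℂ (V γ g) (V γ g) : ℂ) = 0 := by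
        rw [MeasureTheory.L2.inner_def] at h0 ⊢
        rw [← h0]
        apply integral_congr_ae
        filter_upwards [hVg] with x hx
        rw [hx]
        by_cases hxB : x ∈ Bl γ
        · rw [Set.indicator_of_mem hxB]
        · rw [Set.indicator_of_notMem hxB, inner_zero_left, inner_zero_left]
      have h2 : V γ g = 0 := inner_self_eq_zero.mp h1
      refine hVg.symm.trans ?_
      rw [h2]
      exact Lp.coeFn_zero _ _ _
    have hae : (h : G → ℂ) =ᵐ[μ] 0 := by
      filter_upwards [ae_all_iff.mpr hzero] with x hx
      obtain ⟨γ, hγ⟩ := hcover x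
      have := hx γ
      rwa [Set.indicator_of_mem hγ] at this
    exact Lp.eq_zero_iff_ae_eq_zero.mpr hae
  have hsum : IsHilbertSum ℂ (fun _ : Γ => Lp ℂ 2 (μ.restrict B)) V := IsHilbertSum.mk hortho htotal
  -- the key localization property of U := hsum.linearIsometryEquiv.symm
  have key : ∀ (F : lp (fun _ : Γ => Lp ℂ 2 (μ.restrict B)) 2) (γ : Γ),
      (hsum.linearIsometryEquiv.symm F : G → ℂ) =ᵐ[μ.restrict (Bl γ)] (V γ (F γ) : G → ℂ) := by
    intro F γ
    refine tsum_loc Measure.restrict_le_self hsum F γ ?_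
    intro δ hδγ
    filter_upwards [ae_restrict_of_ae (hVcoe δ (F δ)), ae_restrict_mem (hBl_meas γ)] with x hx hxB
    rw [hx]
    have hnot : x ∉ Bl δ := fun hc => (hdisj δ γ hδγ x hc) hxB
    simp only [hVf_def, Set.indicator_of_notMem hnot, Pi.zero_apply]
  -- the intertwining relation at the level of single isometries
  have hVrel : ∀ (γ δ : Γ) (g : Lp ℂ 2 (μ.restrict B)),
      lamG (γ:G) (V δ g) = σ (γ:G) (δ:G) • V (γ*δ) g := by
    intro γ δ g
    apply Lp_ext_ae
    have h2 : ∀ᵐ y ∂μ, (V δ g : G → ℂ) ((γ:G)⁻¹ * y) = Vf δ (g : G → ℂ) ((γ:G)⁻¹ * y) :=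
      (measurePreserving_mul_left μ ((γ:G)⁻¹)).quasiMeasurePreserving.tendsto_ae.eventually
        (hVcoe δ g)
    filter_upwards [hlamG (γ:G) (V δ g), h2, Lp.coeFn_smul (σ (γ:G) (δ:G)) (V (γ*δ) g),
      hVcoe (γ*δ) g] with y e1 e2 e3 e4
    rw [e1, e2, e3, Pi.smul_apply, e4, smul_eq_mul]
    have hmem_iff : ((γ:G)⁻¹ * y ∈ Bl δ) ↔ (y ∈ Bl (γ*δ)) := by
      simp only [hBl_def, Set.mem_preimage, Subgroup.coe_mul, mul_inv_rev, mul_assoc]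
    by_cases hz : (γ:G)⁻¹ * y ∈ Bl δ
    · simp only [hVf_def, Set.indicator_of_mem hz, Set.indicator_of_mem (hmem_iff.mp hz)]
      simp only [Subgroup.coe_mul, mul_inv_rev, mul_assoc]
      have hc := hσ_cocycle (γ:G) (δ:G) ((δ:G)⁻¹ * ((γ:G)⁻¹ * y))
      rw [mul_inv_cancel_left] at hc
      linear_combination ((g : G → ℂ) ((δ:G)⁻¹ * ((γ:G)⁻¹ * y))) * hc.symm
    · simp only [hVf_def, Set.indicator_of_notMem hz,
        Set.indicator_of_notMem (fun hc => hz (hmem_iff.mpr hc)), mul_zero]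
  refine ⟨hsum.linearIsometryEquiv.symm, ?_, ?_⟩
  · intro F γ
    have h1 : (hsum.linearIsometryEquiv.symm F : G → ℂ) =ᵐ[μ.restrict (Bl γ)] fun x =>
        σ (γ:G) ((γ:G)⁻¹*x) * (F γ : G → ℂ) ((γ:G)⁻¹*x) := by
      filter_upwards [key F γ, ae_restrict_of_ae (hVcoe γ (F γ)), ae_restrict_mem (hBl_meas γ)]
        with x e1 e2 e3
      rw [e1, e2]
      simp only [hVf_def, Set.indicator_of_mem e3]
    have h2 := (mpγ γ).quasiMeasurePreserving.tendsto_ae.eventually h1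
    filter_upwards [h2] with y hy
    simpa [inv_mul_cancel_left] using hy
  · intro γ F
    rw [hsum.linearIsometryEquiv_symm_apply, hsum.linearIsometryEquiv_symm_apply,
      ContinuousLinearMap.map_tsum _ (hortho.summable_of_lp F),
      ← (Equiv.mulLeft γ).tsum_eq (fun γ' => V γ' ((lamΓ γ F) γ'))]
    apply tsum_congr
    intro δ
    have e0 : (Equiv.mulLeft γ) δ = γ * δ := rfl
    rw [e0, hlamΓ]
    have e1 : (γ⁻¹ * (γ * δ) : Γ) = δ := by group
    rw [e1, LinearIsometry.map_smul]
    exact (hVrel γ δ (F δ)).symm
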